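/- Expansion inequality: there is a constant c > 0 such that for all ℓ ≥ 0, all r ∈ [0,1], and all nonzero w ∈ r (the 5-dimensional complement of so(Q₀) in sl₃(ℝ)), ‖Ad(a_ℓ u_r) w‖ ≥ c · e^ℓ · ‖(Ad(u_r) w)⁺‖, where X⁺ denotes the orthogonal projection of X onto the span of the positive a_t-weight vectors in r. -/
import Mathlib

open Matrix

def Jmat : Matrix (Fin 3) (Fin 3) ℝ := !![0, 0, -1; 0, 1, 0; -1, 0, 0]

noncomputable def aMat (t : ℝ) : Matrix (Fin 3) (Fin 3) ℝ :=
  !![Real.exp t, 0, 0; 0, 1, 0; 0, 0, Real.exp (-t)]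

noncomputable def uMat (r : ℝ) : Matrix (Fin 3) (Fin 3) ℝ :=
  !![1, r, r ^ 2 / 2; 0, 1, r; 0, 0, 1]

/-- The adjoint action Ad(g)X = gXg⁻¹. -/
noncomputable def Adj (g X : Matrix (Fin 3) (Fin 3) ℝ) : Matrix (Fin 3) (Fin 3) ℝ :=
  g * X * g⁻¹

/-- Membership in r = orthogonal complement of h = so(Q₀) inside sl₃(ℝ),
w.r.t. the trace form ⟨X,Y⟩ = tr(XYᵀ). -/
def memR (w : Matrix (Fin 3) (Fin 3) ℝ) : Prop :=
  Matrix.trace w = 0 ∧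
  ∀ X : Matrix (Fin 3) (Fin 3) ℝ,
    Matrix.trace X = 0 → Xᵀ * Jmat + Jmat * X = 0 → Matrix.trace (X * wᵀ) = 0

/-- Basis of r⁺ = Lie(V): weight e^t direction. -/
def Emat : Matrix (Fin 3) (Fin 3) ℝ := !![0, -1, 0; 0, 0, 1; 0, 0, 0]

/-- Basis of r⁺ = Lie(V): weight e^{2t} direction (center of W). -/
def Fmat : Matrix (Fin 3) (Fin 3) ℝ := !![0, 0, 1; 0, 0, 0; 0, 0, 0]

/-- Orthogonal projection onto r⁺ (w.r.t. the trace form). -/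
noncomputable def plusPart (X : Matrix (Fin 3) (Fin 3) ℝ) : Matrix (Fin 3) (Fin 3) ℝ :=
  ((X 1 2 - X 0 1) / 2) • Emat + X 0 2 • Fmat

/-- Frobenius norm, induced by ⟨X,Y⟩ = tr(XYᵀ). -/
noncomputable def frob (X : Matrix (Fin 3) (Fin 3) ℝ) : ℝ :=
  Real.sqrt (Matrix.trace (X * Xᵀ))

lemma aMat_inv (t : ℝ) : (aMat t)⁻¹ = aMat (-t) := by
  apply Matrix.inv_eq_right_inv
  ext i j
  fin_cases i <;> fin_cases j <;>
    simp [aMat, Matrix.mul_apply, Fin.sum_univ_three, ← Real.exp_add,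
      Matrix.vecHead, Matrix.vecTail]

lemma key (ℓ : ℝ) (hℓ : 0 ≤ ℓ) (Y : Matrix (Fin 3) (Fin 3) ℝ) :
    frob (Adj (aMat ℓ) Y) ≥ Real.exp ℓ * frob (plusPart Y) := by
  set E := Real.exp ℓ with hE
  have hE1 : 1 ≤ E := Real.one_le_exp hℓ
  have hE0 : 0 < E := Real.exp_pos ℓ
  have h2 : Real.exp ℓ * frob (plusPart Y) =
      Real.sqrt (E ^ 2 * Matrix.trace (plusPart Y * (plusPart Y)ᵀ)) := by
    rw [Real.sqrt_mul (by positivity), frob, Real.sqrt_sq hE0.le]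
  rw [ge_iff_le, h2, frob]
  apply Real.sqrt_le_sqrt
  have expinv : Real.exp (-ℓ) = E⁻¹ := by rw [Real.exp_neg]
  have tr1 : Matrix.trace (Adj (aMat ℓ) Y * (Adj (aMat ℓ) Y)ᵀ) =
      (Y 0 0)^2 + E^2 * (Y 0 1)^2 + (E^2)^2 * (Y 0 2)^2
      + (E⁻¹)^2 * (Y 1 0)^2 + (Y 1 1)^2 + E^2 * (Y 1 2)^2
      + ((E⁻¹)^2)^2 * (Y 2 0)^2 + (E⁻¹)^2 * (Y 2 1)^2 + (Y 2 2)^2 := by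
    rw [Adj, aMat_inv]
    simp [aMat, Matrix.trace, Matrix.mul_apply, Matrix.vecMul, dotProduct,
      Fin.sum_univ_three, Matrix.vecHead, Matrix.vecTail, Matrix.diag, expinv]
    have : E ≠ 0 := hE0.ne'
    field_simp
    ring
  have tr2 : Matrix.trace (plusPart Y * (plusPart Y)ᵀ) =
      (Y 1 2 - Y 0 1)^2 / 2 + (Y 0 2)^2 := by
    simp [plusPart, Emat, Fmat, Matrix.trace, Matrix.mul_apply,
      Fin.sum_univ_three, Matrix.vecHead, Matrix.vecTail, Matrix.diag]
    ring
  rw [tr1, tr2]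
  have hEi : E⁻¹ > 0 := by positivity
  nlinarith [sq_nonneg (Y 0 1 + Y 1 2), sq_nonneg (Y 0 0), sq_nonneg (Y 1 1),
    sq_nonneg (Y 2 2), sq_nonneg (Y 1 0 * E⁻¹), sq_nonneg (Y 2 1 * E⁻¹),
    sq_nonneg (Y 2 0 * E⁻¹ * E⁻¹), sq_nonneg (Y 0 2), sq_nonneg (Y 0 2 * E),
    mul_pos hE0 hE0, sq_nonneg ((Y 0 2) * (E^2 - E))]

/-- Expansion inequality: ‖Ad(a_ℓ u_r) w‖ ≥ c e^ℓ ‖(Ad(u_r) w)⁺‖. -/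
theorem expansion_inequality :
    ∃ c : ℝ, c > 0 ∧ ∀ ℓ r : ℝ, 0 ≤ ℓ → r ∈ Set.Icc (0 : ℝ) 1 →
      ∀ w : Matrix (Fin 3) (Fin 3) ℝ, memR w → w ≠ 0 →
        frob (Adj (aMat ℓ * uMat r) w) ≥ c * Real.exp ℓ * frob (plusPart (Adj (uMat r) w)) := by
  refine ⟨1, one_pos, fun ℓ r hℓ _ w _ _ => ?_⟩
  have : Adj (aMat ℓ * uMat r) w = Adj (aMat ℓ) (Adj (uMat r) w) := by
    rw [Adj, Adj, Adj, Matrix.mul_inv_rev]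
    noncomm_ring
  rw [this, one_mul]
  exact key ℓ hℓ _
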